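/- Let V ⊂ ℝ^l be a linear subspace defined over the real algebraic numbers, and suppose V is not contained in any proper rational subspace of ℝ^l (i.e., any proper subspace defined over ℚ). Then there exists a vector w ∈ V whose coordinates are real algebraic numbers that are linearly independent over ℚ. -/

import Mathlib

open Polynomial IntermediateField Module

set_option maxHeartbeats 1000000
set_option synthInstance.maxHeartbeats 400000



lemma no_rat_pow_eq_two (p : ℕ) (hp : p.Prime) : ∀ b : ℚ, b ^ p ≠ 2 := by
  intro b hb
  haveI : Fact (Nat.Prime 2) := ⟨Nat.prime_two⟩
  have hb0 : b ≠ 0 := by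
    rintro rfl
    rw [zero_pow hp.ne_zero] at hb
    norm_num at hb
  have h1 : padicValRat 2 (b ^ p) = p * padicValRat 2 b := padicValRat.pow b
  rw [hb] at h1
  have h2 : padicValRat 2 2 = 1 := by
    have := padicValRat.self (p := 2) (by norm_num)
    norm_num at this
    exact_mod_cast this
  rw [h2] at h1
  have : (p : ℤ) ≤ 1 := Int.le_of_dvd (by norm_num) ⟨_, h1⟩
  have := hp.two_le
  omega

lemma minpoly_root_two (p : ℕ) (hp : p.Prime) :
    minpoly ℚ ((2:ℝ) ^ ((p:ℝ)⁻¹)) = X ^ p - C (2:ℚ) := by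
  have hαp : ((2:ℝ) ^ ((p:ℝ)⁻¹)) ^ p = 2 := Real.rpow_inv_natCast_pow (by norm_num) hp.ne_zero
  have hirr : Irreducible (X ^ p - C (2:ℚ)) :=
    X_pow_sub_C_irreducible_of_prime hp (no_rat_pow_eq_two p hp)
  have hmon : (X ^ p - C (2:ℚ)).Monic := monic_X_pow_sub_C (2:ℚ) hp.ne_zero
  have hev : (aeval ((2:ℝ) ^ ((p:ℝ)⁻¹))) (X ^ p - C (2:ℚ)) = 0 := by
    simp [hαp]
  exact (minpoly.eq_of_irreducible_of_monic hirr hev hmon).symm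


lemma claimA (l : ℕ) (V : Submodule ℝ (Fin l → ℝ))
    (hirr : ∀ W : Submodule ℝ (Fin l → ℝ),
      (∃ S : Set (Fin l → ℚ), W = Submodule.span ℝ ((fun c : Fin l → ℚ => fun i => (c i : ℝ)) '' S)) →
      V ≤ W → W = ⊤) (c : Fin l → ℚ) (hc : c ≠ 0) :
    ∃ x ∈ V, (∑ i, (c i : ℝ) * x i) ≠ 0 := by
  by_contra hcon
  push_neg at hcon
  obtain ⟨i₀, hi₀⟩ : ∃ i, c i ≠ 0 := Function.ne_iff.mp hc
  set q : Fin l → Fin l → ℚ :=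
    fun j i => (if j = i then 1 else 0) - (c j / c i₀) * (if i₀ = i then 1 else 0) with hq
  set W : Submodule ℝ (Fin l → ℝ) :=
    Submodule.span ℝ ((fun c : Fin l → ℚ => fun i => (c i : ℝ)) '' Set.range q) with hW
  have hqcast : ∀ j i, ((q j i : ℚ) : ℝ) =
      (if j = i then (1:ℝ) else 0) - (c j : ℝ)/(c i₀ : ℝ) * (if i₀ = i then 1 else 0) := by
    intro j i
    simp only [hq]
    push_cast
    split_ifs <;> norm_num
  have key : ∀ x : Fin l → ℝ, (∑ i, (c i : ℝ) * x i) = 0 → x ∈ W := by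
    intro x hx
    have hxe : x = ∑ j, x j • (fun i => ((q j i : ℚ) : ℝ)) := by
      funext i
      simp only [Finset.sum_apply, Pi.smul_apply, smul_eq_mul, hqcast, mul_sub,
        Finset.sum_sub_distrib, mul_ite, mul_one, mul_zero]
      rw [Finset.sum_ite_eq' Finset.univ i (fun j => x j)]
      by_cases h : i₀ = i
      · simp only [h, if_true, Finset.mem_univ]
        have : (∑ j, x j * ((c j : ℝ)/(c i : ℝ))) = (∑ j, (c j : ℝ) * x j) / (c i : ℝ) := by
          rw [Finset.sum_div]
          exact Finset.sum_congr rfl (fun j _ => by ring)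
        rw [this, hx, zero_div, sub_zero]
      · simp [h]
    rw [hxe]
    exact Submodule.sum_mem _ fun j _ =>
      Submodule.smul_mem _ _ (Submodule.subset_span ⟨q j, ⟨j, rfl⟩, rfl⟩)
  have hVW : V ≤ W := fun x hx => key x (hcon x hx)
  have hWtop := hirr W ⟨Set.range q, rfl⟩ hVW
  set f : (Fin l → ℝ) →ₗ[ℝ] ℝ := ∑ i, (c i : ℝ) • LinearMap.proj i with hf
  have hfapp : ∀ x : Fin l → ℝ, f x = ∑ i, (c i : ℝ) * x i := by
    intro x
    simp [hf, LinearMap.sum_apply, LinearMap.smul_apply, LinearMap.proj_apply, smul_eq_mul]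
  have hWker : W ≤ LinearMap.ker f := by
    rw [hW, Submodule.span_le]
    rintro _ ⟨d, ⟨j, rfl⟩, rfl⟩
    simp only [SetLike.mem_coe, LinearMap.mem_ker, hfapp]
    simp only [hqcast, mul_sub, Finset.sum_sub_distrib, mul_ite, mul_one, mul_zero,
      ← mul_assoc]
    rw [Finset.sum_ite_eq Finset.univ j (fun i => (c i : ℝ)),
      Finset.sum_ite_eq Finset.univ i₀ (fun i => (c i : ℝ) * ((c j : ℝ)/(c i₀ : ℝ)))]
    simp only [Finset.mem_univ, if_true]
    have : (c i₀ : ℝ) ≠ 0 := by exact_mod_cast hi₀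
    field_simp
    simp
  have hsingle : (Pi.single i₀ (1:ℝ)) ∈ W := hWtop ▸ Submodule.mem_top
  have hker := hWker hsingle
  rw [LinearMap.mem_ker, hfapp] at hker
  have hsum : (∑ i, (c i : ℝ) * (Pi.single i₀ (1:ℝ) : Fin l → ℝ) i) = (c i₀ : ℝ) := by
    have : ∀ i : Fin l, (c i : ℝ) * (Pi.single i₀ (1:ℝ) : Fin l → ℝ) i
        = if i = i₀ then (c i : ℝ) else 0 := by
      intro i
      rw [Pi.single_apply]
      split_ifs <;> simp
    simp only [this]
    rw [Finset.sum_ite_eq' Finset.univ i₀ (fun i => (c i : ℝ))]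
    simp
  rw [hsum] at hker
  exact hi₀ (by exact_mod_cast hker)




lemma exists_linearIndependent_algebraic (F : IntermediateField ℚ ℝ)
    [FiniteDimensional ℚ F] (k : ℕ) :
    ∃ a : Fin k → ℝ, (∀ j, IsAlgebraic ℚ (a j)) ∧ LinearIndependent F a := by
  set d := finrank ℚ F with hd
  have hd1 : 1 ≤ d := hd ▸ finrank_pos
  obtain ⟨p, hpge, hp⟩ := Nat.exists_infinite_primes (k * d + 1)
  set α : ℝ := (2:ℝ) ^ ((p:ℝ)⁻¹) with hα
  have hminα : minpoly ℚ α = X ^ p - C (2:ℚ) := minpoly_root_two p hp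
  have hintα : IsIntegral ℚ α := by
    refine ⟨X ^ p - C (2:ℚ), monic_X_pow_sub_C (2:ℚ) hp.ne_zero, ?_⟩
    rw [← aeval_def]
    have hαp : α ^ p = 2 := Real.rpow_inv_natCast_pow (by norm_num) hp.ne_zero
    simp [hαp]
  have hdegα : (minpoly ℚ α).natDegree = p := by
    rw [hminα, natDegree_X_pow_sub_C]
  have hintαF : IsIntegral F α := hintα.tower_top
  set e := (minpoly F α).natDegree with he
  have hindF : LinearIndependent F (fun i : Fin e => α ^ (i : ℕ)) := linearIndependent_pow α
  have hke : k ≤ e := by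
    haveI : FiniteDimensional F F⟮α⟯ := IntermediateField.adjoin.finiteDimensional hintαF
    have h1 : finrank F F⟮α⟯ = e := IntermediateField.adjoin.finrank hintαF
    haveI : FiniteDimensional ℚ F⟮α⟯ := FiniteDimensional.trans ℚ F F⟮α⟯
    have h2 : finrank ℚ F * finrank F F⟮α⟯ = finrank ℚ F⟮α⟯ :=
      finrank_mul_finrank ℚ F F⟮α⟯
    have h3 : p ≤ finrank ℚ F⟮α⟯ := by
      have hα_mem : α ∈ F⟮α⟯ := IntermediateField.mem_adjoin_simple_self F α
      set u : Fin p → F⟮α⟯ := fun i => (⟨α, hα_mem⟩ : F⟮α⟯) ^ (i : ℕ) with hu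
      have hindQ : LinearIndependent ℚ (fun i : Fin p => α ^ (i : ℕ)) := by
        have := linearIndependent_pow (K := ℚ) (S := ℝ) α
        rwa [hdegα] at this
      have hindu : LinearIndependent ℚ u := by
        apply LinearIndependent.of_comp ((Algebra.linearMap F⟮α⟯ ℝ).restrictScalars ℚ)
        convert hindQ with i <;> rfl
      simpa using hindu.fintype_card_le_finrank
    have hlt : k * d < d * e := by
      rw [← hd, h1] at h2
      omega
    have := Nat.lt_of_mul_lt_mul_left (a := d) (by rw [mul_comm k d] at hlt; exact hlt)
    omega
  refine ⟨fun j : Fin k => α ^ (j : ℕ), fun j => (hintα.pow _).isAlgebraic, ?_⟩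
  have := hindF.comp (Fin.castLE hke) (Fin.castLE_injective hke)
  convert this with j
  rfl

/-- If `V ⊆ ℝ^l` is a subspace defined over the real algebraic numbers
(i.e. spanned by vectors with algebraic coordinates) which is not contained in any proper
rational subspace, then `V` contains a vector `w` whose coordinates are (real) algebraic
numbers that are linearly independent over `ℚ`. -/
theorem exists_algebraic_vector_with_rationally_independent_coordinates
    (l : ℕ) (V : Submodule ℝ (Fin l → ℝ))
    -- V is defined over the real algebraic numbers:
    (halg : ∃ b : Set (Fin l → ℝ), V = Submodule.span ℝ b ∧
      ∀ v ∈ b, ∀ i, IsAlgebraic ℚ (v i))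
    -- V is not contained in any proper subspace defined over ℚ:
    (hirr : ∀ W : Submodule ℝ (Fin l → ℝ),
      (∃ S : Set (Fin l → ℚ), W = Submodule.span ℝ ((fun c : Fin l → ℚ => fun i => (c i : ℝ)) '' S)) →
      V ≤ W → W = ⊤) :
    ∃ w ∈ V, (∀ i, IsAlgebraic ℚ (w i)) ∧
      ∀ c : Fin l → ℚ, (∑ i, (c i : ℝ) * w i) = 0 → c = 0 := by
  classical
  obtain ⟨b, hVb, hbalg⟩ := halg
  -- Step 1: a finite generating subset T ⊆ b
  obtain ⟨G, hG⟩ : V.FG := (isNoetherian_def.mp inferInstance) V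
  have hgmem : ∀ g ∈ (G : Set (Fin l → ℝ)), ∃ t : Finset (Fin l → ℝ),
      ↑t ⊆ b ∧ g ∈ Submodule.span ℝ (t : Set (Fin l → ℝ)) := by
    intro g hg
    have : g ∈ Submodule.span ℝ b := by
      rw [← hVb]; rw [← hG]; exact Submodule.subset_span hg
    exact Submodule.mem_span_finite_of_mem_span this
  choose! tf htf1 htf2 using hgmem
  set T : Finset (Fin l → ℝ) := G.biUnion (fun g => tf g) with hT
  have hTb : ↑T ⊆ b := by
    intro x hx
    simp only [hT, Finset.coe_biUnion, Set.mem_iUnion, Finset.mem_coe] at hx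
    obtain ⟨g, hg, hx⟩ := hx
    exact htf1 g (by exact_mod_cast hg) hx
  have hTspan : Submodule.span ℝ (T : Set (Fin l → ℝ)) = V := by
    apply le_antisymm
    · rw [Submodule.span_le]
      exact fun x hx => hVb ▸ Submodule.subset_span (hTb hx)
    · rw [← hG, Submodule.span_le]
      intro g hg
      refine Submodule.span_mono ?_ (htf2 g (by exact_mod_cast hg))
      intro x hx
      simp only [hT, Finset.coe_biUnion, Set.mem_iUnion, Finset.mem_coe]
      exact ⟨g, by exact_mod_cast hg, hx⟩
  set k := T.card with hk
  set v : Fin k → (Fin l → ℝ) := fun j => ((T.equivFin.symm j : T) : Fin l → ℝ) with hv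
  have hvrange : Set.range v = (T : Set (Fin l → ℝ)) := by
    ext x
    constructor
    · rintro ⟨j, rfl⟩
      exact (T.equivFin.symm j).2
    · intro hx
      exact ⟨T.equivFin ⟨x, hx⟩, by simp [hv]⟩
  have hvmem : ∀ j, v j ∈ V := by
    intro j
    rw [← hTspan]
    exact Submodule.subset_span (by rw [← hvrange]; exact ⟨j, rfl⟩)
  have hvalg : ∀ j i, IsAlgebraic ℚ (v j i) := by
    intro j i
    exact hbalg _ (hTb (by rw [← hvrange]; exact ⟨j, rfl⟩)) i
  have hvspan : Submodule.span ℝ (Set.range v) = V := by rw [hvrange, hTspan]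
  -- Step 2: the number field F generated by the entries
  set E : Set ℝ := Set.range (fun ji : Fin k × Fin l => v ji.1 ji.2) with hE
  haveI : Finite E := Set.finite_range _
  set F : IntermediateField ℚ ℝ := IntermediateField.adjoin ℚ E with hF
  haveI hFfd : FiniteDimensional ℚ F :=
    IntermediateField.finiteDimensional_adjoin (fun x hx => by
      obtain ⟨⟨j, i⟩, rfl⟩ := hx
      exact (hvalg j i).isIntegral)
  have hvF : ∀ j i, v j i ∈ F := fun j i =>
    IntermediateField.subset_adjoin ℚ E ⟨(j, i), rfl⟩
  obtain ⟨a, haalg, haind⟩ := exists_linearIndependent_algebraic F k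
  -- Step 5: the vector w
  set w : Fin l → ℝ := ∑ j, a j • v j with hw
  have hwV : w ∈ V := Submodule.sum_mem _ (fun j _ => Submodule.smul_mem _ _ (hvmem j))
  have hwcoord : ∀ i, w i = ∑ j, a j * v j i := by
    intro i
    rw [hw]
    simp [Finset.sum_apply]
  refine ⟨w, hwV, ?_, ?_⟩
  · intro i
    rw [hwcoord]
    have hmem : (∑ j, a j * v j i) ∈ integralClosure ℚ ℝ :=
      Subalgebra.sum_mem _ (fun j _ => mul_mem ((haalg j).isIntegral) ((hvalg j i).isIntegral))
    exact IsIntegral.isAlgebraic hmem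
  · intro c hc0
    by_contra hcne
    obtain ⟨x, hxV, hxne⟩ := claimA l V hirr c hcne
    have hswap : (∑ i, (c i : ℝ) * w i) = ∑ j, (∑ i, (c i : ℝ) * v j i) * a j := by
      simp only [hwcoord, Finset.mul_sum]
      rw [Finset.sum_comm]
      refine Finset.sum_congr rfl (fun j _ => ?_)
      rw [Finset.sum_mul]
      exact Finset.sum_congr rfl (fun i _ => by ring)
    have hmF : ∀ j, (∑ i, (c i : ℝ) * v j i) ∈ F := fun j =>
      Subalgebra.sum_mem _ (fun i _ =>
        mul_mem (SubfieldClass.ratCast_mem F (c i)) (hvF j i))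
    set μ : Fin k → F := fun j => ⟨∑ i, (c i : ℝ) * v j i, hmF j⟩ with hμ
    have hsmul : ∀ (y : F) (r : ℝ), y • r = (y : ℝ) * r := fun y r => rfl
    have hrel : ∑ j, μ j • a j = 0 := by
      rw [Finset.sum_congr rfl (fun j _ => hsmul (μ j) (a j))]
      rw [← hswap]
      exact hc0
    have hμ0 := (Fintype.linearIndependent_iff.mp haind) μ hrel
    have hm0 : ∀ j, (∑ i, (c i : ℝ) * v j i) = 0 := by
      intro j
      have := congrArg (Subtype.val) (hμ0 j)
      simpa [hμ] using this
    -- the functional kills V, contradiction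
    have hx0 : (∑ i, (c i : ℝ) * x i) = 0 := by
      set f : (Fin l → ℝ) →ₗ[ℝ] ℝ := ∑ i, (c i : ℝ) • LinearMap.proj i with hf
      have hfapp : ∀ y : Fin l → ℝ, f y = ∑ i, (c i : ℝ) * y i := by
        intro y
        simp [hf, LinearMap.sum_apply, LinearMap.smul_apply, LinearMap.proj_apply, smul_eq_mul]
      have hVker : V ≤ LinearMap.ker f := by
        rw [← hvspan, Submodule.span_le]
        rintro _ ⟨j, rfl⟩
        simp only [SetLike.mem_coe, LinearMap.mem_ker, hfapp]
        exact hm0 j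
      have := hVker hxV
      rw [LinearMap.mem_ker, hfapp] at this
      exact this
    exact hxne hx0
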